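/- Let n ≥ 3 be odd and G a nonbipartite 2-connected graph of order n that contains an odd cycle C with |V(C)| < n. Then q(C_n) < q(G) whenever C contains a vertex v_μ with |x(v_μ)| maximal for some eigenvector X of Q(G) corresponding to q(G). -/

import Mathlib

open Matrix SimpleGraph
open scoped Classical

/-- The signless Laplacian matrix `Q(G) = D(G) + A(G)` of a simple graph. -/
noncomputable def signlessLaplacian {V : Type*} [Fintype V] (G : SimpleGraph V) :
    Matrix V V ℝ := fun i j =>
  (if i = j then ((G.neighborSet i).ncard : ℝ) else 0) + (if G.Adj i j then 1 else 0)

/-- The least eigenvalue `q(G)` of the signless Laplacian of `G`. -/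
noncomputable def leastQEig {V : Type*} [Fintype V] (G : SimpleGraph V) : ℝ :=
  sInf {μ : ℝ | ∃ x : V → ℝ, x ≠ 0 ∧ (signlessLaplacian G).mulVec x = μ • x}

/-- A graph is 2-connected if it has at least 3 vertices and no cut vertex. -/
def TwoConnected {V : Type*} [Fintype V] (G : SimpleGraph V) : Prop :=
  3 ≤ Fintype.card V ∧
    ∀ v : V, (((⊤ : G.Subgraph).deleteVerts {v}).coe).Connected

/-- The cycle `C_n` on vertices `v_0, …, v_{n-1}`. -/
def cycleG (n : ℕ) : SimpleGraph (Fin n) :=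
  SimpleGraph.fromRel (fun i j => (i.val + 1) % n = j.val)

/-- `H(i₁,…,i_k)`: the cycle `C_n` together with the chords `v_i v_{n-i}` for `i ∈ S`. -/
def Hgraph (n : ℕ) (S : Finset ℕ) : SimpleGraph (Fin n) :=
  cycleG n ⊔ SimpleGraph.fromRel (fun a b => ∃ i ∈ S, a.val = i ∧ b.val = n - i)

/-- `Θ(j,k)`: the odd cycle `v₁v₂⋯v_{n-1}v₁` plus a vertex `v₀` adjacent to `v_j` and `v_k`. -/
def thetaJK (n j k : ℕ) : SimpleGraph (Fin n) :=
  SimpleGraph.fromRel (fun a b =>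
    (1 ≤ a.val ∧ b.val = a.val + 1) ∨ (a.val = 1 ∧ b.val = n - 1) ∨
      (a.val = 0 ∧ (b.val = j ∨ b.val = k)))

/-- The graph `Θ = Θ(2, n-1)`. -/
def thetaG (n : ℕ) : SimpleGraph (Fin n) := thetaJK n 2 (n - 1)

set_option linter.unusedSectionVars false
set_option linter.unnecessarySeqFocus false
set_option linter.unreachableTactic false
set_option linter.unusedTactic false

section aux
variable {W : Type*} [Fintype W]

private lemma deg_eq (H : SimpleGraph W) (i : W) :
    ((H.neighborSet i).ncard : ℝ) = ∑ j, if H.Adj i j then (1:ℝ) else 0 := by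
  classical
  rw [Set.ncard_eq_toFinset_card']
  have h : (H.neighborSet i).toFinset = Finset.univ.filter (fun j => H.Adj i j) := by
    ext j; rw [Set.mem_toFinset]; simp [SimpleGraph.neighborSet]
  rw [h, Finset.card_filter]
  push_cast
  rfl

private noncomputable def qf (H : SimpleGraph W) (y : W → ℝ) : ℝ :=
  ∑ i, ∑ j, if H.Adj i j then (y i + y j)^2 else 0

private lemma qf_nonneg (H : SimpleGraph W) (y : W → ℝ) : 0 ≤ qf H y := by
  refine Finset.sum_nonneg fun i _ => Finset.sum_nonneg fun j _ => ?_
  split <;> positivity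

private lemma mulVec_sl (H : SimpleGraph W) (y : W → ℝ) (i : W) :
    ((signlessLaplacian H) *ᵥ y) i
      = ((H.neighborSet i).ncard : ℝ) * y i + ∑ j, if H.Adj i j then y j else 0 := by
  classical
  simp only [signlessLaplacian, mulVec, dotProduct]
  have : ∀ j : W, ((if i = j then ((H.neighborSet i).ncard : ℝ) else 0)
      + (if H.Adj i j then 1 else 0)) * y j
      = (if i = j then ((H.neighborSet i).ncard : ℝ) * y j else 0)
        + (if H.Adj i j then y j else 0) := by
    intro j
    by_cases h1 : i = j <;> by_cases h2 : H.Adj i j <;> simp [h1, h2]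
  rw [Finset.sum_congr rfl fun j _ => this j, Finset.sum_add_distrib,
    Finset.sum_ite_eq Finset.univ i fun j => ((H.neighborSet i).ncard : ℝ) * y j]
  simp

private lemma qf_eq_two_dot (H : SimpleGraph W) (y : W → ℝ) :
    qf H y = 2 * (y ⬝ᵥ ((signlessLaplacian H) *ᵥ y)) := by
  classical
  have hdot : y ⬝ᵥ ((signlessLaplacian H) *ᵥ y)
      = (∑ i, ∑ j, if H.Adj i j then y i ^ 2 else 0)
        + ∑ i, ∑ j, if H.Adj i j then y i * y j else 0 := by
    simp only [dotProduct, mulVec_sl, deg_eq]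
    rw [← Finset.sum_add_distrib]
    refine Finset.sum_congr rfl fun i _ => ?_
    rw [mul_add, Finset.mul_sum]
    congr 1
    · rw [mul_comm, mul_assoc, ← sq, Finset.sum_mul]
      exact Finset.sum_congr rfl fun j _ => by by_cases h : H.Adj i j <;> simp [h]
    · exact Finset.sum_congr rfl fun j _ => by by_cases h : H.Adj i j <;> simp [h]
  have hswap : (∑ i, ∑ j, if H.Adj i j then (y j) ^ 2 else 0)
      = ∑ i, ∑ j, if H.Adj i j then (y i) ^ 2 else 0 := by
    rw [Finset.sum_comm]
    refine Finset.sum_congr rfl fun i _ => Finset.sum_congr rfl fun j _ => ?_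
    rw [SimpleGraph.adj_comm]
  have hexp : qf H y = (∑ i, ∑ j, if H.Adj i j then (y i) ^ 2 else 0)
      + ((∑ i, ∑ j, if H.Adj i j then (y j) ^ 2 else 0)
      + (∑ i, ∑ j, if H.Adj i j then 2*(y i * y j) else 0)) := by
    unfold qf
    rw [← Finset.sum_add_distrib, ← Finset.sum_add_distrib]
    refine Finset.sum_congr rfl fun i _ => ?_
    rw [← Finset.sum_add_distrib, ← Finset.sum_add_distrib]
    refine Finset.sum_congr rfl fun j _ => ?_
    by_cases h : H.Adj i j <;> simp [h] <;> ring
  have hpull : (∑ i, ∑ j, if H.Adj i j then 2*(y i * y j) else 0)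
      = 2 * ∑ i, ∑ j, if H.Adj i j then y i * y j else 0 := by
    rw [Finset.mul_sum]
    refine Finset.sum_congr rfl fun i _ => ?_
    rw [Finset.mul_sum]
    refine Finset.sum_congr rfl fun j _ => ?_
    by_cases h : H.Adj i j <;> simp [h]
  rw [hexp, hswap, hpull, hdot]; ring

private lemma dot_self_pos {y : W → ℝ} (hy : y ≠ 0) : 0 < y ⬝ᵥ y := by
  obtain ⟨i, hi⟩ := Function.ne_iff.mp hy
  have : (0:ℝ) < y i * y i := by
    rcases lt_or_gt_of_ne (show y i ≠ 0 from hi) with h | h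
    · exact mul_pos_of_neg_of_neg h h
    · exact mul_pos h h
  exact Finset.sum_pos' (fun j _ => mul_self_nonneg _) ⟨i, Finset.mem_univ i, this⟩

private lemma eig_nonneg (H : SimpleGraph W) {y : W → ℝ} {μ : ℝ} (hy : y ≠ 0)
    (he : (signlessLaplacian H) *ᵥ y = μ • y) : 0 ≤ μ := by
  have h1 : y ⬝ᵥ ((signlessLaplacian H) *ᵥ y) = μ * (y ⬝ᵥ y) := by
    rw [he, dotProduct_smul, smul_eq_mul]
  have h2 : 0 ≤ μ * (y ⬝ᵥ y) := by
    rw [← h1]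
    have h3 := qf_eq_two_dot H y
    have h4 := qf_nonneg H y
    linarith
  by_contra hneg
  push_neg at hneg
  exact absurd h2 (not_le.mpr (mul_neg_of_neg_of_pos hneg (dot_self_pos hy)))

private lemma leastQEig_le (H : SimpleGraph W) {y : W → ℝ} {μ : ℝ} (hy : y ≠ 0)
    (he : (signlessLaplacian H) *ᵥ y = μ • y) : leastQEig H ≤ μ := by
  refine csInf_le ⟨0, ?_⟩ ⟨y, hy, he⟩
  rintro ν ⟨y', hy', he'⟩
  exact eig_nonneg H hy' he'

private lemma qf_zero_sign {H : SimpleGraph W} {y : W → ℝ} (h : qf H y = 0) :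
    ∀ u v, H.Adj u v → y v = - y u := by
  intro u v huv
  have h1 : ∀ i ∈ Finset.univ, (0:ℝ) ≤ ∑ j, if H.Adj i j then (y i + y j)^2 else 0 := by
    intro i _
    refine Finset.sum_nonneg fun j _ => ?_
    split <;> positivity
  have h2 := (Finset.sum_eq_zero_iff_of_nonneg h1).mp h u (Finset.mem_univ u)
  have h3 : ∀ j ∈ Finset.univ, (0:ℝ) ≤ if H.Adj u j then (y u + y j)^2 else 0 := by
    intro j _; split <;> positivity
  have h4 := (Finset.sum_eq_zero_iff_of_nonneg h3).mp h2 v (Finset.mem_univ v)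
  rw [if_pos huv] at h4
  have h5 : y u + y v = 0 := by
    have := sq_eq_zero_iff.mp h4
    linarith
  linarith

private lemma sign_walk {H : SimpleGraph W} {x : W → ℝ}
    (hsgn : ∀ u v, H.Adj u v → x v = - x u) :
    ∀ {a b : W} (w : H.Walk a b), x b = (-1)^w.length * x a := by
  intro a b w
  induction w with
  | nil => simp
  | @cons a u b h p ih =>
    rw [ih, hsgn a u h, Walk.length_cons, pow_succ]
    ring

private lemma support_eq_map_getVert {H : SimpleGraph W} :
    ∀ {a b : W} (w : H.Walk a b), w.support = (List.range (w.length+1)).map w.getVert := by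
  intro a b w
  induction w with
  | nil => simp [Walk.support_nil, List.range_succ]
  | @cons a u b h p ih =>
    rw [Walk.support_cons, Walk.length_cons, ih,
      List.range_succ_eq_map (n := p.length + 1), List.map_cons, List.map_map]
    congr 1

private lemma dartsum_eq {H : SimpleGraph W} (f : W → W → ℝ) :
    ∀ {a b : W} (w : H.Walk a b),
    (w.darts.map (fun d => f d.toProd.1 d.toProd.2)).sum
      = ∑ i ∈ Finset.range w.length, f (w.getVert i) (w.getVert (i+1)) := by
  intro a b w
  induction w with
  | nil => simp
  | @cons a u b h p ih =>
    rw [Walk.darts_cons, List.map_cons, List.sum_cons, Walk.length_cons,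
      Finset.sum_range_succ']
    simp only [Walk.getVert_cons_succ, Walk.getVert_zero]
    rw [ih]
    exact add_comm _ _

private lemma pairs_nodup {H : SimpleGraph W} {a b : W} (w : H.Walk a b)
    (hw : w.edges.Nodup) :
    (w.darts.map SimpleGraph.Dart.toProd
      ++ w.darts.map (fun d => d.toProd.swap)).Nodup := by
  have hd : w.darts.Nodup := by
    have : (w.darts.map SimpleGraph.Dart.edge).Nodup := by
      rw [← Walk.edges]; exact hw
    exact this.of_map
  have hinj : ∀ d1 ∈ w.darts, ∀ d2 ∈ w.darts, d1.edge = d2.edge → d1 = d2 := by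
    have : (w.darts.map SimpleGraph.Dart.edge).Nodup := by
      rw [← Walk.edges]; exact hw
    exact fun d1 h1 d2 h2 he => List.inj_on_of_nodup_map this h1 h2 he
  refine List.Nodup.append ?_ ?_ ?_
  · exact hd.map (fun d1 d2 hh => SimpleGraph.Dart.ext _ _ hh)
  · exact hd.map (fun d1 d2 hh => SimpleGraph.Dart.ext _ _ (Prod.swap_injective hh))
  · intro p hp1 hp2
    obtain ⟨d1, hd1, rfl⟩ := List.mem_map.mp hp1
    obtain ⟨d2, hd2, hh⟩ := List.mem_map.mp hp2
    have he : d2.edge = d1.edge := by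
      rw [Dart.edge, Dart.edge, ← hh]
      exact Sym2.eq_swap
    have : d2 = d1 := hinj d2 hd2 d1 hd1 he
    subst this
    have h12 : d2.toProd.2 = d2.toProd.1 := congrArg Prod.fst hh
    exact H.irrefl (h12 ▸ d2.adj)

private lemma sl_herm (H : SimpleGraph W) : (signlessLaplacian H).IsHermitian := by
  classical
  unfold Matrix.IsHermitian
  rw [Matrix.conjTranspose_eq_transpose_of_trivial]
  ext i j
  simp only [Matrix.transpose_apply, signlessLaplacian]
  by_cases h : i = j
  · subst h; rfl
  · have h' : ¬ j = i := fun hh => h hh.symm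
    rw [if_neg h, if_neg h']
    congr 1
    by_cases hadj : H.Adj i j
    · rw [if_pos hadj, if_pos hadj.symm]
    · rw [if_neg hadj, if_neg (fun hh => hadj hh.symm)]

private lemma list_range_sum (g : ℕ → ℝ) :
    ∀ j : ℕ, ((List.range j).map g).sum = ∑ i ∈ Finset.range j, g i := by
  intro j
  induction j with
  | zero => simp
  | succ j ih =>
    rw [List.range_succ, List.map_append, List.sum_append, Finset.sum_range_succ, ih]
    simp

end aux

private lemma exists_eig_le {N : Type*} [Fintype N] [DecidableEq N] [Nonempty N]
    {A : Matrix N N ℝ} (hA : A.IsHermitian) (z : N → ℝ) :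
    ∃ (μ : ℝ) (y : N → ℝ), y ≠ 0 ∧ A *ᵥ y = μ • y ∧ μ * (z ⬝ᵥ z) ≤ z ⬝ᵥ (A *ᵥ z) := by
  obtain ⟨i0, -, hi0⟩ := Finset.exists_min_image Finset.univ hA.eigenvalues
    ⟨Classical.arbitrary N, Finset.mem_univ _⟩
  refine ⟨hA.eigenvalues i0, hA.eigenvectorBasis i0,
    fun h => hA.eigenvectorBasis.orthonormal.ne_zero i0 (by simpa using h), hA.mulVec_eigenvectorBasis i0, ?_⟩
  set U : Matrix N N ℝ := (Matrix.IsHermitian.eigenvectorUnitary hA : Matrix N N ℝ) with hU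
  have hUU : U * star U = 1 := (Matrix.mem_unitaryGroup_iff).mp
    (Matrix.IsHermitian.eigenvectorUnitary hA).2
  set w : N → ℝ := z ᵥ* U with hw
  have hsUz : star U *ᵥ z = w := by
    rw [hw, Matrix.star_eq_conjTranspose, Matrix.conjTranspose_eq_transpose_of_trivial,
      ← Matrix.mulVec_transpose]
  have hww : w ⬝ᵥ w = z ⬝ᵥ z := by
    nth_rewrite 2 [← hsUz]
    rw [hw, ← dotProduct_mulVec, mulVec_mulVec, hUU, one_mulVec]
  have hdiag : z ⬝ᵥ (A *ᵥ z) = ∑ i, hA.eigenvalues i * (w i)^2 := by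
    nth_rewrite 1 [hA.spectral_theorem]
    rw [Unitary.conjStarAlgAut_apply, ← mulVec_mulVec, ← mulVec_mulVec, hsUz, dotProduct_mulVec, ← hw]
    simp only [dotProduct, mulVec_diagonal, Function.comp_apply, RCLike.ofReal_real_eq_id,
      id_eq]
    exact Finset.sum_congr rfl fun i _ => by ring
  have hfin : ∑ i, hA.eigenvalues i * (w i)^2 ≥ hA.eigenvalues i0 * (z ⬝ᵥ z) := by
    rw [← hww]
    have : w ⬝ᵥ w = ∑ i, (w i)^2 := by
      simp [dotProduct, sq]
    rw [this, Finset.mul_sum]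
    exact Finset.sum_le_sum fun i _ =>
      mul_le_mul_of_nonneg_right (hi0 i (Finset.mem_univ i)) (sq_nonneg _)
  rw [hdiag]
  exact hfin

section cyc
variable {n : ℕ} [NeZero n]

private lemma val_add_one (hn3 : 3 ≤ n) (a : Fin n) :
    ((a + 1 : Fin n) : ℕ) = (a.val + 1) % n := by
  rw [Fin.add_def, Fin.val_one']
  have h1 : 1 % n = 1 := Nat.mod_eq_of_lt (by omega)
  rw [h1]

private lemma cycle_adj (hn3 : 3 ≤ n) (i j : Fin n) :
    (cycleG n).Adj i j ↔ (j = i + 1 ∨ i = j + 1) := by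
  have hne : ∀ a : Fin n, a ≠ a + 1 := by
    intro a h
    have h1 : (1 : Fin n) = 0 := by
      have := h.symm
      rwa [add_eq_left] at this
    have h2 : (1 : Fin n).val = (0 : Fin n).val := congrArg Fin.val h1
    rw [Fin.val_one', Fin.val_zero, Nat.mod_eq_of_lt (by omega)] at h2
    omega
  constructor
  · rintro ⟨hij, h | h⟩
    · left; exact Fin.ext ((val_add_one hn3 i) ▸ h.symm)
    · right; exact Fin.ext ((val_add_one hn3 j) ▸ h.symm)
  · rintro (h | h)
    · exact ⟨h ▸ (hne i), Or.inl (h ▸ (val_add_one hn3 i).symm)⟩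
    · exact ⟨fun hh => (hne j) (hh ▸ h), Or.inr (h ▸ (val_add_one hn3 j).symm)⟩

open scoped Fin.NatCast in
private lemma two_val_fin (hn3 : 3 ≤ n) : ((2 : Fin n) : ℕ) = 2 := by
  have h : ((2 : ℕ) : Fin n) = (2 : Fin n) := rfl
  rw [← h, Fin.val_natCast]
  exact Nat.mod_eq_of_lt (by omega)

open scoped Fin.CommRing in
private lemma succ_ne_pred (hn3 : 3 ≤ n) (i : Fin n) : i + 1 ≠ i - 1 := by
  intro h
  have h2 : i + 2 = i := by
    have he : i + 2 = (i + 1) + 1 := by ring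
    rw [he, h, sub_add_cancel]
  have h3 : (2 : Fin n) = 0 := by
    nth_rewrite 2 [← add_zero i] at h2
    exact add_left_cancel h2
  have h4 := congrArg Fin.val h3
  rw [two_val_fin hn3, Fin.val_zero] at h4
  omega

open scoped Fin.CommRing in
private lemma cycle_deg (hn3 : 3 ≤ n) (i : Fin n) :
    (((cycleG n).neighborSet i).ncard : ℝ) = 2 := by
  have hset : (cycleG n).neighborSet i = {i + 1, i - 1} := by
    ext j
    rw [SimpleGraph.mem_neighborSet, cycle_adj hn3]
    simp only [Set.mem_insert_iff, Set.mem_singleton_iff]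
    constructor
    · rintro (h | h)
      · exact Or.inl h
      · right; rw [h]; ring
    · rintro (h | h)
      · exact Or.inl h
      · right; rw [h]; ring
  rw [hset, Set.ncard_pair (succ_ne_pred hn3 i)]
  norm_num

private lemma pair_sum {a b : Fin n} (hab : a ≠ b) (f : Fin n → ℝ) :
    (∑ j, if (j = a ∨ j = b) then f j else 0) = f a + f b := by
  have key : ∀ j : Fin n, (if (j = a ∨ j = b) then f j else 0)
      = (if j = a then f j else 0) + (if j = b then f j else 0) := by
    intro j
    by_cases h1 : j = a <;> by_cases h2 : j = b
    · exact absurd (h1 ▸ h2) hab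
    · simp [h1, h2, hab]
    · simp [h1, h2, Ne.symm hab]
    · simp [h1, h2]
  rw [Finset.sum_congr rfl fun j _ => key j, Finset.sum_add_distrib,
    Finset.sum_ite_eq' Finset.univ a f, Finset.sum_ite_eq' Finset.univ b f]
  simp

open scoped Fin.CommRing in
private lemma cycle_nsum (hn3 : 3 ≤ n) (f : Fin n → ℝ) (i : Fin n) :
    (∑ j, if (cycleG n).Adj i j then f j else 0) = f (i + 1) + f (i - 1) := by
  have hiff : ∀ j : Fin n, (cycleG n).Adj i j ↔ (j = i + 1 ∨ j = i - 1) := by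
    intro j
    rw [cycle_adj hn3]
    constructor
    · rintro (h | h)
      · exact Or.inl h
      · right; rw [h]; ring
    · rintro (h | h)
      · exact Or.inl h
      · right; rw [h]; ring
  rw [Finset.sum_congr rfl fun j _ => by rw [if_congr (hiff j) rfl rfl]]
  exact pair_sum (succ_ne_pred hn3 i) f

end cyc

theorem stmt14 (n : ℕ) (hn : 3 ≤ n) (hodd : Odd n) {V : Type*} [Fintype V]
    (G : SimpleGraph V) (hcard : Fintype.card V = n)
    (h2 : TwoConnected G) (hnb : ¬ G.Colorable 2)
    (x : V → ℝ) (hx : x ≠ 0)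
    (heig : (signlessLaplacian G).mulVec x = leastQEig G • x)
    (vμ : V) (hmax : ∀ v : V, |x v| ≤ |x vμ|)
    {a : V} (c : G.Walk a a) (hc : c.IsCycle) (hcodd : Odd c.length)
    (hvμ : vμ ∈ c.support) (hlen : c.length < n) :
    leastQEig (cycleG n) < leastQEig G := by
  classical
  haveI : NeZero n := ⟨by omega⟩
  -- rotate the cycle to start at vμ
  set c' : G.Walk vμ vμ := c.rotate vμ hvμ with hc'def
  have hc'cyc : c'.IsCycle := hc.rotate hvμ
  have hlenrot : c'.length = c.length := by
    rw [hc'def]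
    unfold SimpleGraph.Walk.rotate
    have hts := congrArg SimpleGraph.Walk.length (c.take_spec hvμ)
    rw [Walk.length_append] at hts
    rw [Walk.length_append]
    omega
  set k := c'.length with hkdef
  have hk3 : 3 ≤ k := hc'cyc.three_le_length
  have hkodd : Odd k := by rw [hlenrot]; exact hcodd
  have hkn : k < n := by rw [hlenrot]; exact hlen
  have hkn2 : k + 2 ≤ n := by
    obtain ⟨p, hp⟩ := hodd
    obtain ⟨q, hq⟩ := hkodd
    omega
  set m : ℝ := x vμ with hmdef
  have hm0 : m ≠ 0 := by
    intro h0
    apply hx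
    funext v
    have hv := hmax v
    rw [h0, abs_zero] at hv
    simp only [Pi.zero_apply]
    exact abs_nonpos_iff.mp hv
  -- G-side spectral identities
  set qG := leastQEig G with hqGdef
  have hxQ : x ⬝ᵥ (signlessLaplacian G *ᵥ x) = qG * (x ⬝ᵥ x) := by
    rw [show (signlessLaplacian G).mulVec x = qG • x from heig, dotProduct_smul, smul_eq_mul]
  have hqf : qf G x = 2 * (qG * (x ⬝ᵥ x)) := by rw [qf_eq_two_dot, hxQ]
  have hxxpos : 0 < x ⬝ᵥ x := dot_self_pos hx
  have hqG0 : 0 ≤ qG := by nlinarith [qf_nonneg G x]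
  have hqGpos : 0 < qG := by
    rcases eq_or_lt_of_le hqG0 with he | h
    swap
    · exact h
    exfalso
    have hqf0 : qf G x = 0 := by rw [hqf, ← he]; ring
    have hsgn : ∀ u v, G.Adj u v → x v = - x u := qf_zero_sign hqf0
    have hsw := sign_walk hsgn c'
    rw [← hkdef, Odd.neg_one_pow hkodd, ← hmdef] at hsw
    apply hm0
    linarith
  -- vertices along the rotated cycle
  set u : ℕ → V := fun i => c'.getVert i with hudef
  have hu0 : u 0 = vμ := c'.getVert_zero
  have huk : u k = vμ := c'.getVert_length
  set dl : List V := (List.range k).map u with hdldef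
  have hdllen : dl.length = k := by simp [hdldef]
  have hsupp2 : c'.support = dl ++ [vμ] := by
    rw [support_eq_map_getVert c', List.range_succ, List.map_append]
    simp [hdldef, huk, hudef]; rfl
  have hdlnd : dl.Nodup := by
    have htl : c'.support.tail.Nodup := hc'cyc.support_nodup
    have hdlne : dl ≠ [] := by
      intro h
      rw [h] at hdllen
      simp at hdllen
      omega
    obtain ⟨d0, rest, hdl⟩ := List.exists_cons_of_ne_nil hdlne
    have hcons : dl ++ [vμ] = vμ :: c'.support.tail := by
      rw [← hsupp2]
      exact c'.support_eq_cons
    rw [hdl] at hcons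
    simp only [List.cons_append] at hcons
    have h0 : d0 = vμ := (List.cons.injEq _ _ _ _).mp hcons |>.1
    have htail : rest ++ [vμ] = c'.support.tail :=
      ((List.cons.injEq _ _ _ _).mp hcons).2
    rw [← htail, List.nodup_append] at htl
    rw [hdl]
    refine List.nodup_cons.mpr ⟨?_, htl.1⟩
    rw [h0]
    intro hmem
    exact htl.2.2 vμ hmem vμ (List.mem_singleton_self vμ) rfl
  set CS : Finset V := dl.toFinset with hCSdef
  have hCScard : CS.card = k := by
    rw [hCSdef, List.toFinset_card_of_nodup hdlnd, hdllen]
  have hsubCS : ∀ v ∈ c'.support, v ∈ CS := by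
    intro v hv
    rw [hsupp2] at hv
    rcases List.mem_append.mp hv with h | h
    · exact List.mem_toFinset.mpr h
    · rw [List.mem_singleton.mp h]
      refine List.mem_toFinset.mpr ?_
      rw [hdldef]
      exact List.mem_map.mpr ⟨0, List.mem_range.mpr (by omega), hu0⟩
  -- sums of squares
  set M : ℝ := m^2 with hMdef
  set T : ℝ := ∑ v ∈ CS, (x v)^2 with hTdef
  have hsq : ∀ v, (x v)^2 ≤ M := by
    intro v
    have h1 := hmax v
    calc (x v)^2 = |x v|^2 := (sq_abs _).symm
      _ ≤ |m|^2 := by gcongr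
      _ = M := by rw [sq_abs, hMdef]
  have hdot2 : x ⬝ᵥ x = ∑ v, (x v)^2 := by simp [dotProduct, sq]
  have hxxsplit : x ⬝ᵥ x = T + ∑ v ∈ Finset.univ \ CS, (x v)^2 := by
    rw [hdot2, hTdef, add_comm]
    exact (Finset.sum_sdiff (Finset.subset_univ CS)).symm
  have hcardout : (Finset.univ \ CS).card = n - k := by
    rw [Finset.card_sdiff_of_subset (Finset.subset_univ CS), hCScard, Finset.card_univ, hcard]
  have hOut : ∑ v ∈ Finset.univ \ CS, (x v)^2 ≤ ((n - k : ℕ) : ℝ) * M := by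
    have h1 := Finset.sum_le_card_nsmul (Finset.univ \ CS) (fun v => (x v)^2) M
      (fun v _ => hsq v)
    rw [hcardout, nsmul_eq_mul] at h1
    exact h1
  -- edge-sum N along the rotated cycle
  set N : ℝ := ∑ i ∈ Finset.range k, (x (u i) + x (u (i+1)))^2 with hNdef
  have hdartsum : (c'.darts.map (fun d => (x d.toProd.1 + x d.toProd.2)^2)).sum = N := by
    rw [dartsum_eq (fun a b => (x a + x b)^2) c']
  set D : Finset (V × V) := Finset.univ.filter (fun p => G.Adj p.1 p.2) with hDdef
  have hqfD : qf G x = ∑ p ∈ D, (x p.1 + x p.2)^2 := by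
    rw [hDdef, Finset.sum_filter]
    exact (Fintype.sum_prod_type
      (fun p : V × V => if G.Adj p.1 p.2 then (x p.1 + x p.2)^2 else 0)).symm
  set L : List (V × V) := c'.darts.map SimpleGraph.Dart.toProd
      ++ c'.darts.map (fun d => d.toProd.swap) with hLdef
  have hLnd : L.Nodup := pairs_nodup c' hc'cyc.isCircuit.isTrail.edges_nodup
  have hLD : L.toFinset ⊆ D := by
    intro p hp
    rw [List.mem_toFinset, hLdef, List.mem_append] at hp
    rw [hDdef, Finset.mem_filter]
    refine ⟨Finset.mem_univ _, ?_⟩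
    rcases hp with h | h
    · obtain ⟨d, hd, rfl⟩ := List.mem_map.mp h
      exact d.adj
    · obtain ⟨d, hd, rfl⟩ := List.mem_map.mp h
      exact d.adj.symm
  have hLsum : ∑ p ∈ L.toFinset, (x p.1 + x p.2)^2 = 2 * N := by
    rw [List.sum_toFinset _ hLnd, hLdef, List.map_append, List.sum_append,
      List.map_map, List.map_map]
    have e1 : (c'.darts.map ((fun p : V × V => (x p.1 + x p.2)^2)
        ∘ SimpleGraph.Dart.toProd)).sum = N := by
      rw [← hdartsum]; rfl
    have e2 : (c'.darts.map ((fun p : V × V => (x p.1 + x p.2)^2)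
        ∘ (fun d : G.Dart => d.toProd.swap))).sum = N := by
      rw [← hdartsum]
      congr 1
      refine List.map_congr_left fun d _ => ?_
      simp only [Function.comp_apply, Prod.fst_swap, Prod.snd_swap]
      ring
    rw [e1, e2]; ring
  have hsd : ∑ p ∈ D \ L.toFinset, (x p.1 + x p.2)^2 = qf G x - 2 * N := by
    have h := Finset.sum_sdiff (f := fun p : V × V => (x p.1 + x p.2)^2) hLD
    rw [hLsum, ← hqfD] at h
    linarith
  have hNle : N ≤ qG * (x ⬝ᵥ x) := by
    have hnn : 0 ≤ ∑ p ∈ D \ L.toFinset, (x p.1 + x p.2)^2 :=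
      Finset.sum_nonneg fun p _ => sq_nonneg _
    rw [hsd] at hnn
    linarith [hqf]
  -- the test vector z on Fin n
  set wf : ℕ → ℝ := fun i => if i < k then x (u i) else (-1:ℝ)^(i-k) * m with hwfdef
  set z : Fin n → ℝ := fun i => wf i.val with hzdef
  have hAH : (signlessLaplacian (cycleG n)).IsHermitian := sl_herm (cycleG n)
  haveI : Nonempty (Fin n) := ⟨⟨0, by omega⟩⟩
  obtain ⟨μ0, y0, hy00, hy0eig, hray⟩ := exists_eig_le hAH z
  have hqCle : leastQEig (cycleG n) ≤ μ0 := leastQEig_le (cycleG n) hy00 hy0eig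
  -- quadratic form of z on the cycle graph
  have hzA : z ⬝ᵥ (signlessLaplacian (cycleG n) *ᵥ z) = ∑ i : Fin n, (z i + z (i+1))^2 := by
    have hstep : ∀ i : Fin n, (signlessLaplacian (cycleG n) *ᵥ z) i
        = 2 * z i + (z (i+1) + z (i-1)) := by
      intro i
      rw [mulVec_sl, cycle_deg hn, cycle_nsum hn]
    have hre1 : ∑ i : Fin n, z i * z (i - 1) = ∑ i : Fin n, z i * z (i + 1) := by
      refine (Fintype.sum_equiv (Equiv.addRight (1 : Fin n))
        (fun i => z i * z (i + 1)) (fun i => z i * z (i - 1)) ?_).symm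
      intro i
      simp only [Equiv.coe_addRight]
      rw [add_sub_cancel_right]
      ring
    have hre2 : ∑ i : Fin n, (z (i+1))^2 = ∑ i : Fin n, (z i)^2 :=
      Fintype.sum_equiv (Equiv.addRight (1 : Fin n)) _ _ (fun i => rfl)
    have lhs_eq : z ⬝ᵥ (signlessLaplacian (cycleG n) *ᵥ z)
        = 2 * (∑ i : Fin n, (z i)^2) + ((∑ i : Fin n, z i * z (i+1))
          + ∑ i : Fin n, z i * z (i-1)) := by
      simp only [dotProduct]
      rw [Finset.sum_congr rfl fun i _ => by rw [hstep i]]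
      rw [Finset.mul_sum, ← Finset.sum_add_distrib, ← Finset.sum_add_distrib]
      exact Finset.sum_congr rfl fun i _ => by ring
    have rhs_eq : ∑ i : Fin n, (z i + z (i+1))^2
        = (∑ i : Fin n, (z i)^2) + ((∑ i : Fin n, (z (i+1))^2)
          + 2 * ∑ i : Fin n, z i * z (i+1)) := by
      rw [Finset.mul_sum, ← Finset.sum_add_distrib, ← Finset.sum_add_distrib]
      exact Finset.sum_congr rfl fun i _ => by ring
    rw [lhs_eq, rhs_eq, hre1, hre2]
    ring
  -- the cycle energy of z equals N
  have hvadd : ∀ i : Fin n, z (i + 1) = wf ((i.val + 1) % n) := by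
    intro i
    rw [hzdef]
    simp only
    rw [val_add_one hn]
  have hzN : ∑ i : Fin n, (z i + z (i+1))^2 = N := by
    have h1 : ∀ i : Fin n, (z i + z (i+1))^2
        = (fun t => (wf t + wf ((t+1) % n))^2) i.val := by
      intro i
      simp only
      rw [hvadd i]
    rw [Finset.sum_congr rfl fun i _ => h1 i,
      Fin.sum_univ_eq_sum_range (fun t => (wf t + wf ((t+1)%n))^2) n,
      Finset.range_eq_Ico, ← Finset.sum_Ico_consecutive _ (Nat.zero_le k) (le_of_lt hkn)]
    have hA1 : ∑ t ∈ Finset.Ico 0 k, (wf t + wf ((t+1)%n))^2 = N := by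
      rw [← Finset.range_eq_Ico, hNdef]
      refine Finset.sum_congr rfl fun t ht => ?_
      have htk : t < k := Finset.mem_range.mp ht
      have hmod : (t+1) % n = t+1 := Nat.mod_eq_of_lt (by omega)
      rw [hmod]
      have hwt : wf t = x (u t) := if_pos htk
      have hwt1 : wf (t+1) = x (u (t+1)) := by
        by_cases hlt : t+1 < k
        · exact if_pos hlt
        · have ht1 : t+1 = k := by omega
          have : wf (t+1) = (-1:ℝ)^(t+1-k) * m := if_neg (by omega)
          rw [this, ht1, Nat.sub_self, pow_zero, one_mul, hmdef, ← huk]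
      rw [hwt, hwt1]
    have hA2 : ∑ t ∈ Finset.Ico k n, (wf t + wf ((t+1)%n))^2 = 0 := by
      refine Finset.sum_eq_zero fun t ht => ?_
      obtain ⟨htk, htn⟩ := Finset.mem_Ico.mp ht
      have hwt : wf t = (-1:ℝ)^(t-k) * m := if_neg (by omega)
      by_cases ht1 : t + 1 < n
      · have hmod : (t+1) % n = t+1 := Nat.mod_eq_of_lt ht1
        have hw1 : wf (t+1) = (-1:ℝ)^(t+1-k) * m := if_neg (by omega)
        rw [hmod, hwt, hw1, show t+1-k = (t-k)+1 by omega, pow_succ]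
        ring
      · have htn1 : t + 1 = n := by omega
        have hmod : (t+1) % n = 0 := by rw [htn1, Nat.mod_self]
        have hw0 : wf 0 = m := by
          have : wf 0 = x (u 0) := if_pos (by omega)
          rw [this, hu0, hmdef]
        have hodd2 : Odd (t - k) := by
          have hte : Even t := by
            have ht' : t = n - 1 := by omega
            rw [ht']
            exact Nat.Odd.sub_odd hodd odd_one
          exact Nat.Even.sub_odd (by omega) hte hkodd
        rw [hmod, hwt, hw0, Odd.neg_one_pow hodd2]
        ring
    rw [hA1, hA2, add_zero]
  -- the norm of z
  have hzz : z ⬝ᵥ z = T + ((n - k : ℕ) : ℝ) * M := by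
    have h0 : z ⬝ᵥ z = ∑ i : Fin n, (fun t => (wf t)^2) i.val := by
      simp only [dotProduct]
      exact Finset.sum_congr rfl fun i _ => by rw [← sq]
    rw [h0, Fin.sum_univ_eq_sum_range (fun t => (wf t)^2) n,
      Finset.range_eq_Ico, ← Finset.sum_Ico_consecutive _ (Nat.zero_le k) (le_of_lt hkn)]
    have hB1 : ∑ t ∈ Finset.Ico 0 k, (wf t)^2 = T := by
      rw [← Finset.range_eq_Ico, hTdef, hCSdef, List.sum_toFinset _ hdlnd, hdldef,
        List.map_map, list_range_sum ((fun v => x v ^2) ∘ u) k]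
      refine Finset.sum_congr rfl fun t ht => ?_
      have htk : t < k := Finset.mem_range.mp ht
      rw [show wf t = x (u t) from if_pos htk]
      rfl
    have hB2 : ∑ t ∈ Finset.Ico k n, (wf t)^2 = ((n - k:ℕ):ℝ) * M := by
      have hconst : ∀ t ∈ Finset.Ico k n, (wf t)^2 = M := by
        intro t ht
        obtain ⟨htk, htn⟩ := Finset.mem_Ico.mp ht
        rw [show wf t = (-1:ℝ)^(t-k) * m from if_neg (by omega), mul_pow, ← pow_mul,
          mul_comm (t-k) 2, pow_mul]
        norm_num [hMdef]
      rw [Finset.sum_congr rfl hconst, Finset.sum_const, Nat.card_Ico, nsmul_eq_mul]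
    rw [hB1, hB2]
  -- the comparison chain
  have hxxle : x ⬝ᵥ x ≤ T + ((n-k:ℕ):ℝ) * M := by
    rw [hxxsplit]
    linarith [hOut]
  have hD0pos : 0 < T + ((n-k:ℕ):ℝ) * M := lt_of_lt_of_le hxxpos hxxle
  have hμ0le : μ0 * (T + ((n-k:ℕ):ℝ) * M) ≤ N := by
    rw [hzz, hzA, hzN] at hray
    exact hray
  by_contra hcon
  push_neg at hcon
  have hqCD : leastQEig (cycleG n) * (T + ((n-k:ℕ):ℝ)*M)
      ≤ μ0 * (T + ((n-k:ℕ):ℝ)*M) :=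
    mul_le_mul_of_nonneg_right hqCle hD0pos.le
  have hqGD : qG * (T + ((n-k:ℕ):ℝ)*M) ≤ leastQEig (cycleG n) * (T + ((n-k:ℕ):ℝ)*M) :=
    mul_le_mul_of_nonneg_right hcon hD0pos.le
  have hqGxx : qG * (x ⬝ᵥ x) ≤ qG * (T + ((n-k:ℕ):ℝ)*M) :=
    mul_le_mul_of_nonneg_left hxxle hqG0
  have heq1 : qG * (x ⬝ᵥ x) = qG * (T + ((n-k:ℕ):ℝ)*M) :=
    le_antisymm hqGxx (by linarith)
  have hxxeq : x ⬝ᵥ x = T + ((n-k:ℕ):ℝ)*M :=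
    mul_left_cancel₀ (ne_of_gt hqGpos) heq1
  have hNeq : N = qG * (x ⬝ᵥ x) := le_antisymm hNle (by linarith)
  -- an outside vertex
  have houtne : (Finset.univ \ CS).Nonempty := by
    rw [← Finset.card_pos, hcardout]
    omega
  obtain ⟨w0, hw0⟩ := houtne
  have hw0n : w0 ∉ CS := (Finset.mem_sdiff.mp hw0).2
  have hw0sup : w0 ∉ c'.support := fun h => hw0n (hsubCS w0 h)
  have hOuteq : ∑ v ∈ Finset.univ \ CS, (x v)^2 = ((n-k:ℕ):ℝ) * M := by
    have h := hxxsplit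
    rw [hxxeq] at h
    linarith
  have hallM : ∀ v ∈ Finset.univ \ CS, (x v)^2 = M := by
    intro v hv
    by_contra hne
    have hlt : (x v)^2 < M := lt_of_le_of_ne (hsq v) hne
    have hsum : ∑ v ∈ Finset.univ \ CS, (x v)^2 < ∑ _v ∈ Finset.univ \ CS, M :=
      Finset.sum_lt_sum (fun i _ => hsq i) ⟨v, hv, hlt⟩
    rw [Finset.sum_const, hcardout, nsmul_eq_mul] at hsum
    linarith [hOuteq]
  -- non-cycle edges vanish
  have hDL0 : ∀ p ∈ D \ L.toFinset, (x p.1 + x p.2)^2 = 0 := by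
    have hz0 : ∑ p ∈ D \ L.toFinset, (x p.1 + x p.2)^2 = 0 := by
      rw [hsd, hqf, hNeq]
      ring
    intro p hp
    exact (Finset.sum_eq_zero_iff_of_nonneg (fun q _ => sq_nonneg _)).mp hz0 p hp
  have hnbr : ∀ j, G.Adj w0 j → x j = - x w0 := by
    intro j hj
    have hmemD : (w0, j) ∈ D := by
      rw [hDdef]
      exact Finset.mem_filter.mpr ⟨Finset.mem_univ _, hj⟩
    have hnotL : (w0, j) ∉ L.toFinset := by
      intro hmem
      rw [List.mem_toFinset, hLdef, List.mem_append] at hmem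
      rcases hmem with h | h
      · obtain ⟨d, hd, hdp⟩ := List.mem_map.mp h
        apply hw0sup
        have hfst : d.toProd.1 = w0 := congrArg Prod.fst hdp
        rw [← hfst]
        exact c'.dart_fst_mem_support_of_mem_darts hd
      · obtain ⟨d, hd, hdp⟩ := List.mem_map.mp h
        apply hw0sup
        have hsnd : d.toProd.2 = w0 := congrArg Prod.fst hdp
        rw [← hsnd]
        exact c'.dart_snd_mem_support_of_mem_darts hd
    have h0 := hDL0 (w0, j) (Finset.mem_sdiff.mpr ⟨hmemD, hnotL⟩)
    have h1 : x w0 + x j = 0 := by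
      have := sq_eq_zero_iff.mp h0
      exact this
    linarith
  -- eigen-equation at w0 gives a contradiction
  have heigw := congrFun heig w0
  rw [show (signlessLaplacian G).mulVec x = signlessLaplacian G *ᵥ x from rfl] at heigw
  rw [mulVec_sl] at heigw
  have hsum0 : (∑ j, if G.Adj w0 j then x j else 0)
      = - (((G.neighborSet w0).ncard : ℝ) * x w0) := by
    have hterm : ∀ j : V, (if G.Adj w0 j then x j else 0)
        = (if G.Adj w0 j then (1:ℝ) else 0) * (- x w0) := by
      intro j
      by_cases h : G.Adj w0 j
      · rw [if_pos h, if_pos h, hnbr j h]; ring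
      · rw [if_neg h, if_neg h]; ring
    rw [Finset.sum_congr rfl fun j _ => hterm j, ← Finset.sum_mul, ← deg_eq]
    ring
  have hfinal : qG * x w0 = 0 := by
    rw [hsum0] at heigw
    have hr : (qG • x) w0 = qG * x w0 := rfl
    rw [hr] at heigw
    linarith [heigw]
  have hxw0 : x w0 = 0 := by
    rcases mul_eq_zero.mp hfinal with h | h
    · exact absurd h (ne_of_gt hqGpos)
    · exact h
  have hm2 : m ^ 2 = 0 := by
    have h := hallM w0 hw0
    rw [hxw0, hMdef] at h
    norm_num at h
    linarith [h]
  exact hm0 ((pow_eq_zero_iff (two_ne_zero)).mp hm2)
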